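/- Let n ≥ 2 and let X be an n-Hausdorff homogeneous space. Then |X| ≤ exp_{n-1}(c(X)·πχ(X)), where exp_{n-1} denotes the (n-1)-times iterated exponential 2^{2^{···^{2^κ}}}. -/

import Mathlib

open Cardinal Set

/-- The cellularity of `X`: the supremum of the cardinalities of pairwise
disjoint families of nonempty open sets, taken at least `ℵ₀`. -/
noncomputable def cellularity (X : Type u) [TopologicalSpace X] : Cardinal.{u} :=
  max ℵ₀ (⨆ 𝒰 : {𝒰 : Set (Set X) //
    (∀ U ∈ 𝒰, IsOpen U ∧ U.Nonempty) ∧ 𝒰.PairwiseDisjoint id}, #𝒰.1)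

/-- `B` is a local π-base at `x`: a family of nonempty open sets such that every
open neighbourhood of `x` contains a member of `B`. -/
def IsLocalPiBase {X : Type u} [TopologicalSpace X] (x : X) (B : Set (Set X)) : Prop :=
  (∀ U ∈ B, IsOpen U ∧ U.Nonempty) ∧ ∀ V : Set X, IsOpen V → x ∈ V → ∃ U ∈ B, U ⊆ V

/-- The π-character of `X`: the supremum over `x ∈ X` of the least cardinality
of a local π-base at `x`, taken at least `ℵ₀`. -/
noncomputable def piCharacter (X : Type u) [TopologicalSpace X] : Cardinal.{u} :=
  max ℵ₀ (⨆ x : X, sInf {κ | ∃ B : Set (Set X), IsLocalPiBase x B ∧ #B = κ})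

/-- A space is homogeneous if for all `x, y` some self-homeomorphism maps `x`
to `y`. -/
def Homogeneous (X : Type*) [TopologicalSpace X] : Prop :=
  ∀ x y : X, ∃ h : X ≃ₜ X, h x = y

/-- A space is `n`-Hausdorff if any `n` distinct points admit open
neighbourhoods with empty total intersection. -/
def NHausdorff (n : ℕ) (X : Type*) [TopologicalSpace X] : Prop :=
  ∀ f : Fin n ↪ X, ∃ U : Fin n → Set X,
    (∀ i, IsOpen (U i) ∧ f i ∈ U i) ∧ ⋂ i, U i = ∅

/-- `expIter k κ` is the `k`-times iterated exponential `2^{2^{⋯^{2^κ}}}`. -/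
def expIter : ℕ → Cardinal.{u} → Cardinal.{u}
  | 0, κ => κ
  | k + 1, κ => 2 ^ expIter k κ

universe u

namespace StmtAux

instance (o : Ordinal.{u}) : IsWellOrder o.ToType ((· < ·) : o.ToType → o.ToType → Prop) :=
  isWellOrder_lt

set_option linter.unusedSectionVars false

lemma mk_finset_le (β : Type u) : #(Finset β) ≤ max ℵ₀ #β := by
  classical
  refine le_trans (Cardinal.mk_le_of_injective (f := Finset.toList) ?_) (Cardinal.mk_list_le_max β)
  intro s t h
  have := congrArg List.toFinset h
  simpa using this

lemma exists_finset_preimage {β γ : Type*} [DecidableEq β] [DecidableEq γ] {g : β → γ}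
    (s : Finset γ) (hs : ↑s ⊆ Set.range g) : ∃ t : Finset β, t.image g = s := by
  induction s using Finset.induction_on with
  | empty => exact ⟨∅, rfl⟩
  | @insert a s ha ih =>
    obtain ⟨t, ht⟩ := ih (fun x hx => hs (by simp [hx]))
    have haR : a ∈ Set.range g := hs (by simp)
    obtain ⟨b, rfl⟩ := haR
    exact ⟨insert b t, by rw [Finset.image_insert, ht]⟩

lemma pigeonhole {α C : Type u} {A : Set α} {κ : Cardinal.{u}} (hκ : ℵ₀ ≤ κ)
    (hC : #C ≤ κ) (hA : κ < #A) (g : α → C) :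
    ∃ c : C, κ < #{a : α | a ∈ A ∧ g a = c} := by
  by_contra hcon
  push_neg at hcon
  have hne : Nonempty ↥A := by
    rw [← Cardinal.mk_ne_zero_iff]
    intro h0
    rw [h0] at hA
    exact (Cardinal.zero_le κ).not_gt hA
  have hCne : Nonempty C := ⟨g hne.some.1⟩
  have hsub : A ⊆ ⋃ c : C, {a | a ∈ A ∧ g a = c} :=
    fun a ha => Set.mem_iUnion.2 ⟨g a, ha, rfl⟩
  have h1 := (Cardinal.mk_le_mk_of_subset hsub).trans (Cardinal.mk_iUnion_le _)
  have h2 : #C * (⨆ c : C, #{a : α | a ∈ A ∧ g a = c}) ≤ κ * κ :=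
    mul_le_mul' hC (ciSup_le' fun c => hcon c)
  rw [Cardinal.mul_eq_self hκ] at h2
  exact hA.not_ge (h1.trans h2)

variable {α C : Type u}

variable [DecidableEq α]

open Classical in
/-- The `f`-type of `a` over `X` for `n`-element subsets. -/
noncomputable def typ (f : Finset α → C) (n : ℕ) (X : Set α) (a : α) : Finset α → Option C :=
  fun b => if (↑b ⊆ X ∧ b.card = n ∧ a ∉ b) then some (f (insert a b)) else none

lemma typ_eval_pos (f : Finset α → C) (n : ℕ) (X : Set α) (a : α) {b : Finset α}
    (h : ↑b ⊆ X ∧ b.card = n ∧ a ∉ b) : typ f n X a b = some (f (insert a b)) := by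
  simp only [typ]
  rw [if_pos h]

lemma typ_eval_neg (f : Finset α → C) (n : ℕ) (X : Set α) (a : α) {b : Finset α}
    (h : ¬(↑b ⊆ X ∧ b.card = n ∧ a ∉ b)) : typ f n X a b = none := by
  simp only [typ]
  rw [if_neg h]

lemma mk_range_typ_le (f : Finset α → C) (n : ℕ) {X : Set α} {μ : Cardinal.{u}}
    (hμ : ℵ₀ ≤ μ) (hX : #X ≤ μ) (hC : #C ≤ 2 ^ μ) :
    #(Set.range (typ f n X)) ≤ 2 ^ μ := by
  classical
  have h2inf : ℵ₀ ≤ (2 : Cardinal.{u}) ^ μ := hμ.trans (cantor μ).le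
  have hexp : #{b : Finset α // ↑b ⊆ X} ≤ μ := by
    have hinj : Function.Injective
        (fun b : {b : Finset α // ↑b ⊆ X} =>
          (b.1.preimage (Subtype.val : X → α) Subtype.val_injective.injOn : Finset X)) := by
      rintro ⟨b, hb⟩ ⟨b', hb'⟩ h
      apply Subtype.ext
      ext x
      simp only at h
      constructor
      · intro hx
        have hxX : x ∈ X := hb hx
        have : (⟨x, hxX⟩ : X) ∈ b.preimage (Subtype.val : X → α) Subtype.val_injective.injOn := by
          simp [Finset.mem_preimage, hx]
        rw [h] at this
        simpa [Finset.mem_preimage] using this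
      · intro hx
        have hxX : x ∈ X := hb' hx
        have : (⟨x, hxX⟩ : X) ∈ b'.preimage (Subtype.val : X → α) Subtype.val_injective.injOn := by
          simp [Finset.mem_preimage, hx]
        rw [← h] at this
        simpa [Finset.mem_preimage] using this
    refine le_trans (Cardinal.mk_le_of_injective hinj) ?_
    exact (mk_finset_le _).trans (max_le hμ hX)
  have hinj : Function.Injective
      (fun (t : Set.range (typ f n X)) => (fun b : {b : Finset α // ↑b ⊆ X} => t.1 b.1)) := by
    rintro ⟨t, a, rfl⟩ ⟨t', a', rfl⟩ h
    apply Subtype.ext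
    funext b
    show typ f n X a b = typ f n X a' b
    by_cases hb : (↑b : Set α) ⊆ X
    · exact congrFun h ⟨b, hb⟩
    · rw [typ_eval_neg _ _ _ _ (fun hc => hb hc.1), typ_eval_neg _ _ _ _ (fun hc => hb hc.1)]
  calc #(Set.range (typ f n X)) ≤ #({b : Finset α // ↑b ⊆ X} → Option C) :=
        Cardinal.mk_le_of_injective hinj
    _ = (#C + 1) ^ #{b : Finset α // ↑b ⊆ X} := by
        rw [← Cardinal.mk_option, ← Cardinal.power_def]
    _ ≤ ((2 : Cardinal.{u}) ^ μ) ^ #{b : Finset α // ↑b ⊆ X} := by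
        refine Cardinal.power_le_power_right ?_
        have : #C + 1 ≤ 2 ^ μ + 2 ^ μ := add_le_add hC (le_trans (by simp) h2inf)
        rwa [Cardinal.add_eq_self h2inf] at this
    _ ≤ ((2 : Cardinal.{u}) ^ μ) ^ μ :=
        Cardinal.power_le_power_left (Cardinal.power_pos μ (by norm_num : (0:Cardinal.{u}) < 2)).ne' hexp
    _ = 2 ^ μ := by rw [← Cardinal.power_mul, Cardinal.mul_eq_self hμ]


variable [Nonempty α]

open Classical in
noncomputable def wit (f : Finset α → C) (n : ℕ) (X : Set α) (t : Finset α → Option C) : α :=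
  if h : ∃ y, y ∉ X ∧ typ f n X y = t then h.choose else Classical.arbitrary α

lemma wit_spec (f : Finset α → C) (n : ℕ) (X : Set α) {a : α} (ha : a ∉ X) :
    wit f n X (typ f n X a) ∉ X ∧ typ f n X (wit f n X (typ f n X a)) = typ f n X a := by
  have h : ∃ y, y ∉ X ∧ typ f n X y = typ f n X a := ⟨a, ha, rfl⟩
  rw [wit, dif_pos h]
  exact h.choose_spec

noncomputable def step (f : Finset α → C) (n : ℕ) (μ : Cardinal.{u}) (A : Set α) : Set α :=
  A ∪ ⋃ (X : {X : Set α // X ⊆ A ∧ #X ≤ μ}), (wit f n X.1) '' Set.range (typ f n X.1)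

lemma subset_step (f : Finset α → C) (n : ℕ) (μ : Cardinal.{u}) (A : Set α) :
    A ⊆ step f n μ A := Set.subset_union_left

lemma wit_mem_step (f : Finset α → C) (n : ℕ) (μ : Cardinal.{u}) {A X : Set α}
    (hXA : X ⊆ A) (hX : #X ≤ μ) (a : α) :
    wit f n X (typ f n X a) ∈ step f n μ A :=
  Set.mem_union_right _ <| Set.mem_iUnion.2 ⟨⟨X, hXA, hX⟩, Set.mem_image_of_mem _ ⟨a, rfl⟩⟩


lemma mk_step_le (f : Finset α → C) (n : ℕ) (μ : Cardinal.{u}) (hμ : ℵ₀ ≤ μ)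
    (hC : #C ≤ 2 ^ μ) {A : Set α} (hA : #A ≤ 2 ^ μ) :
    #(step f n μ A) ≤ 2 ^ μ := by
  have h2inf : ℵ₀ ≤ (2 : Cardinal.{u}) ^ μ := hμ.trans (cantor μ).le
  have hS : #{X : Set α // X ⊆ A ∧ #X ≤ μ} ≤ 2 ^ μ := by
    refine (Cardinal.mk_bounded_subset_le A μ).trans ?_
    calc (max #A ℵ₀ : Cardinal.{u}) ^ μ ≤ ((2 : Cardinal.{u}) ^ μ) ^ μ :=
          Cardinal.power_le_power_right (max_le hA h2inf)
      _ = 2 ^ μ := by rw [← Cardinal.power_mul, Cardinal.mul_eq_self hμ]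
  have hsup : (⨆ (X : {X : Set α // X ⊆ A ∧ #X ≤ μ}),
      #((wit f n X.1) '' Set.range (typ f n X.1))) ≤ 2 ^ μ := by
    have : Nonempty {X : Set α // X ⊆ A ∧ #X ≤ μ} :=
      ⟨⟨∅, Set.empty_subset A, by simp⟩⟩
    exact ciSup_le' fun X =>
      (Cardinal.mk_image_le).trans (mk_range_typ_le f n hμ X.2.2 hC)
  refine (Cardinal.mk_union_le _ _).trans ?_
  have hU := (Cardinal.mk_iUnion_le
    (fun (X : {X : Set α // X ⊆ A ∧ #X ≤ μ}) => (wit f n X.1) '' Set.range (typ f n X.1)))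
  have : #(⋃ (X : {X : Set α // X ⊆ A ∧ #X ≤ μ}),
      (wit f n X.1) '' Set.range (typ f n X.1)) ≤ 2 ^ μ := by
    refine hU.trans ?_
    calc #{X : Set α // X ⊆ A ∧ #X ≤ μ} * _ ≤ (2 ^ μ : Cardinal.{u}) * (2 ^ μ) :=
          mul_le_mul' hS hsup
      _ = 2 ^ μ := Cardinal.mul_eq_self h2inf
  calc #A + _ ≤ (2 ^ μ : Cardinal.{u}) + 2 ^ μ := add_le_add hA this
    _ = 2 ^ μ := Cardinal.add_eq_self h2inf

noncomputable def chainBody (f : Finset α → C) (n : ℕ) (μ : Cardinal.{u})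
    (i : Ordinal.{u}) (IH : ∀ j : Ordinal.{u}, j < i → Set α) : Set α :=
  ⋃ k : i.ToType, step f n μ (IH ((Ordinal.ToType.mk (o := i)).symm k).1
    ((Ordinal.ToType.mk (o := i)).symm k).2)

noncomputable def chain (f : Finset α → C) (n : ℕ) (μ : Cardinal.{u}) : Ordinal.{u} → Set α :=
  Ordinal.lt_wf.fix (chainBody f n μ)

lemma chain_eq (f : Finset α → C) (n : ℕ) (μ : Cardinal.{u}) (i : Ordinal.{u}) :
    chain f n μ i = ⋃ k : i.ToType,
      step f n μ (chain f n μ ((Ordinal.ToType.mk (o := i)).symm k).1) := by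
  rw [chain, Ordinal.lt_wf.fix_eq]
  rfl

lemma step_chain_subset (f : Finset α → C) (n : ℕ) (μ : Cardinal.{u}) {j i : Ordinal.{u}}
    (h : j < i) : step f n μ (chain f n μ j) ⊆ chain f n μ i := by
  rw [chain_eq f n μ i]
  have := Set.subset_iUnion
    (fun k : i.ToType => step f n μ (chain f n μ ((Ordinal.ToType.mk (o := i)).symm k).1))
    (Ordinal.ToType.mk (o := i) ⟨j, h⟩)
  rwa [OrderIso.symm_apply_apply] at this

lemma chain_mono (f : Finset α → C) (n : ℕ) (μ : Cardinal.{u}) {j i : Ordinal.{u}}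
    (h : j ≤ i) : chain f n μ j ⊆ chain f n μ i := by
  rcases eq_or_lt_of_le h with rfl | h
  · exact le_refl _
  · exact (subset_step f n μ _).trans (step_chain_subset f n μ h)

lemma mk_chain_le (f : Finset α → C) (n : ℕ) (μ : Cardinal.{u}) (hμ : ℵ₀ ≤ μ)
    (hC : #C ≤ 2 ^ μ) : ∀ i : Ordinal.{u}, i ≤ (Order.succ μ).ord →
    #(chain f n μ i) ≤ 2 ^ μ := by
  have h2inf : ℵ₀ ≤ (2 : Cardinal.{u}) ^ μ := hμ.trans (cantor μ).le
  intro i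
  induction i using Ordinal.induction with
  | _ i IH =>
    intro hi
    rw [chain_eq]
    refine (Cardinal.mk_iUnion_le _).trans ?_
    have h1 : #i.ToType ≤ 2 ^ μ := by
      rw [Cardinal.mk_toType]
      have h2 : i.card ≤ Order.succ μ := by
        rw [← Cardinal.card_ord (Order.succ μ)]
        exact Ordinal.card_le_card hi
      exact h2.trans (Order.succ_le_of_lt (cantor μ))
    have h3 : (⨆ k : i.ToType,
        #(step f n μ (chain f n μ ((Ordinal.ToType.mk (o := i)).symm k).1))) ≤ 2 ^ μ := by
      rcases isEmpty_or_nonempty i.ToType with h | h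
      · rw [ciSup_of_empty]; exact bot_le
      · refine ciSup_le' fun k => mk_step_le f n μ hμ hC
          (IH _ ((Ordinal.ToType.mk (o := i)).symm k).2
            (le_trans (le_of_lt ((Ordinal.ToType.mk (o := i)).symm k).2) hi))
    calc #i.ToType * _ ≤ (2 ^ μ : Cardinal.{u}) * (2 ^ μ) := mul_le_mul' h1 h3
      _ = 2 ^ μ := Cardinal.mul_eq_self h2inf

lemma chain_closed (f : Finset α → C) (n : ℕ) (μ : Cardinal.{u}) (hμ : ℵ₀ ≤ μ) {X : Set α}
    (hXA : X ⊆ chain f n μ (Order.succ μ).ord) (hX : #X ≤ μ) (a : α) :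
    wit f n X (typ f n X a) ∈ chain f n μ (Order.succ μ).ord := by
  set o := (Order.succ μ).ord with ho
  have hreg := Cardinal.isRegular_succ hμ
  have hx : ∀ x : X, ∃ j : Ordinal.{u}, j < o ∧ (x : α) ∈ step f n μ (chain f n μ j) := by
    intro x
    have hm := hXA x.2
    rw [chain_eq] at hm
    obtain ⟨s, ⟨k, rfl⟩, hks⟩ := hm
    exact ⟨((Ordinal.ToType.mk (o := o)).symm k).1, ((Ordinal.ToType.mk (o := o)).symm k).2, hks⟩
  choose j hjlt hjs using hx
  have hsup : (⨆ x : X, j x) < o := by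
    refine Ordinal.iSup_lt_ord ?_ hjlt
    have : o.cof = Order.succ μ := hreg.cof_eq
    rw [this]
    exact hX.trans_lt (Order.lt_succ μ)
  have holim : Order.IsSuccLimit o := Cardinal.isSuccLimit_ord (hμ.trans (Order.le_succ μ))
  have hj' : (⨆ x : X, j x) + 1 < o := by
    rw [Ordinal.add_one_eq_succ]
    exact holim.succ_lt hsup
  have hXj : X ⊆ chain f n μ ((⨆ x : X, j x) + 1) := by
    intro x hx'
    have hlt : j ⟨x, hx'⟩ < (⨆ x : X, j x) + 1 := by
      refine lt_of_le_of_lt (le_ciSup (Ordinal.bddAbove_range (fun x : X => j x)) ⟨x, hx'⟩) ?_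
      rw [Ordinal.add_one_eq_succ]
      exact Order.lt_succ _
    exact step_chain_subset f n μ hlt (hjs ⟨x, hx'⟩)
  exact step_chain_subset f n μ hj' (wit_mem_step f n μ hXj hX a)


section Seq

variable (f : Finset α → C) (n : ℕ) (μ : Cardinal.{u})

noncomputable def seqBody (a₀ : α) (k : (Order.succ μ).ord.ToType)
    (IH : ∀ j : (Order.succ μ).ord.ToType, j < k → α) : α :=
  wit f n {y | ∃ j, ∃ h : j < k, IH j h = y} (typ f n {y | ∃ j, ∃ h : j < k, IH j h = y} a₀)

noncomputable def seq (a₀ : α) : (Order.succ μ).ord.ToType → α :=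
  (wellFounded_lt).fix (seqBody f n μ a₀)

lemma seq_eq (a₀ : α) (k : (Order.succ μ).ord.ToType) :
    seq f n μ a₀ k = wit f n (seq f n μ a₀ '' Set.Iio k)
      (typ f n (seq f n μ a₀ '' Set.Iio k) a₀) := by
  conv_lhs => rw [seq, WellFounded.fix_eq]
  have hset : {y | ∃ j, ∃ _ : j < k, (wellFounded_lt).fix (seqBody f n μ a₀) j = y}
      = seq f n μ a₀ '' Set.Iio k := by
    ext y
    exact ⟨fun ⟨j, h, e⟩ => ⟨j, h, e⟩, fun ⟨j, h, e⟩ => ⟨j, h, e⟩⟩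
  show wit f n {y | ∃ j, ∃ _ : j < k, (wellFounded_lt).fix (seqBody f n μ a₀) j = y}
      (typ f n {y | ∃ j, ∃ _ : j < k, (wellFounded_lt).fix (seqBody f n μ a₀) j = y} a₀) = _
  rw [hset]

lemma mk_Iio_le (hμ : ℵ₀ ≤ μ) (k : (Order.succ μ).ord.ToType) : #(Set.Iio k) ≤ μ := by
  have h2 := Ordinal.typein_lt_self k
  have h3 := Ordinal.card_typein (r := ((· < ·) : (Order.succ μ).ord.ToType → _ → Prop)) k
  have h4 : #{y // y < k} < Order.succ μ := by
    rw [← h3]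
    exact Cardinal.lt_ord.mp h2
  exact Order.lt_succ_iff.mp h4

lemma seq_spec (hμ : ℵ₀ ≤ μ) {a₀ : α}
    (ha₀ : a₀ ∉ chain f n μ (Order.succ μ).ord) (k : (Order.succ μ).ord.ToType) :
    seq f n μ a₀ k ∈ chain f n μ (Order.succ μ).ord ∧
    seq f n μ a₀ k ∉ seq f n μ a₀ '' Set.Iio k ∧
    typ f n (seq f n μ a₀ '' Set.Iio k) (seq f n μ a₀ k)
      = typ f n (seq f n μ a₀ '' Set.Iio k) a₀ := by
  induction k using WellFoundedLT.induction with
  | ind k IH =>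
    have hXA : seq f n μ a₀ '' Set.Iio k ⊆ chain f n μ (Order.succ μ).ord := by
      rintro _ ⟨j, hj, rfl⟩
      exact (IH j hj).1
    have hXc : #(seq f n μ a₀ '' Set.Iio k) ≤ μ :=
      (Cardinal.mk_image_le).trans (mk_Iio_le μ hμ k)
    have ha₀X : a₀ ∉ seq f n μ a₀ '' Set.Iio k := fun h => ha₀ (hXA h)
    have hwit := wit_spec f n (seq f n μ a₀ '' Set.Iio k) ha₀X
    have hmem := chain_closed f n μ hμ hXA hXc a₀
    refine ⟨?_, ?_, ?_⟩
    · rw [seq_eq f n μ a₀ k]; exact hmem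
    · rw [seq_eq f n μ a₀ k]; exact hwit.1
    · rw [seq_eq f n μ a₀ k]; exact hwit.2

lemma seq_inj (hμ : ℵ₀ ≤ μ) {a₀ : α}
    (ha₀ : a₀ ∉ chain f n μ (Order.succ μ).ord) :
    Function.Injective (seq f n μ a₀) := by
  intro j k hjk
  by_contra hne
  rcases lt_or_gt_of_ne hne with h | h
  · exact (seq_spec f n μ hμ ha₀ k).2.1 ⟨j, h, hjk⟩
  · exact (seq_spec f n μ hμ ha₀ j).2.1 ⟨k, h, hjk.symm⟩

end Seq

end StmtAux

namespace StmtAux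

lemma le_expIter (m : ℕ) (κ : Cardinal.{u}) : κ ≤ expIter m κ := by
  induction m with
  | zero => exact le_rfl
  | succ m ih =>
    exact ih.trans (le_of_lt (by exact_mod_cast Cardinal.cantor (expIter m κ)))

theorem erdosRado (m : ℕ) : ∀ {α C : Type u} (κ : Cardinal.{u}), ℵ₀ ≤ κ → #C ≤ κ →
    expIter m κ < #α → ∀ f : Finset α → C,
    ∃ (c : C) (H : Set α), κ < #H ∧ ∀ s : Finset α, ↑s ⊆ H → s.card = m + 1 → f s = c := by
  induction m with
  | zero =>
    intro α C κ hκ hC hα f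
    classical
    obtain ⟨c, hc⟩ := pigeonhole (A := (Set.univ : Set α)) hκ hC
      (by rwa [Cardinal.mk_univ]) (fun a => f {a})
    refine ⟨c, {a | a ∈ Set.univ ∧ f {a} = c}, hc, ?_⟩
    intro s hs hcard
    obtain ⟨a, rfl⟩ := Finset.card_eq_one.mp hcard
    exact (hs (by simp)).2
  | succ m IH =>
    intro α C κ hκ hC hα f
    classical
    have hμ : ℵ₀ ≤ expIter m κ := hκ.trans (le_expIter m κ)
    set μ := expIter m κ with hμdef
    have hκμ : κ ≤ μ := le_expIter m κ
    have h2μ : (2 : Cardinal.{u}) ^ μ < #α := hα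
    have hC2 : #C ≤ 2 ^ μ := hC.trans (hκμ.trans (Cardinal.cantor μ).le)
    have hαne : Nonempty α := by
      rw [← Cardinal.mk_ne_zero_iff]
      intro h0
      rw [h0] at h2μ
      exact (Cardinal.zero_le _).not_gt h2μ
    have hAcard : #(chain f (m+1) μ (Order.succ μ).ord) ≤ 2 ^ μ :=
      mk_chain_le f (m+1) μ hμ hC2 (Order.succ μ).ord le_rfl
    obtain ⟨a₀, ha₀⟩ : ∃ a₀, a₀ ∉ chain f (m+1) μ (Order.succ μ).ord := by
      by_contra hcon
      push_neg at hcon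
      rw [Set.eq_univ_iff_forall.mpr hcon, Cardinal.mk_univ] at hAcard
      exact (h2μ.trans_le hAcard).false
    have hinj : Function.Injective (seq f (m+1) μ a₀) := seq_inj f (m+1) μ hμ ha₀
    have hseq := seq_spec f (m+1) μ hμ ha₀
    have hEcard : #(Set.range (seq f (m+1) μ a₀)) = Order.succ μ := by
      rw [Cardinal.mk_range_eq _ hinj, Cardinal.mk_toType, Cardinal.card_ord]
    set E := Set.range (seq f (m+1) μ a₀) with hE
    have hEgt : expIter m κ < #E := by
      rw [hEcard]
      exact Order.lt_succ μ
    set f' : Finset ↥E → C := fun b => f (insert a₀ (b.image Subtype.val)) with hf'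
    obtain ⟨c, H', hH'card, hH'⟩ := IH κ hκ hC hEgt f'
    refine ⟨c, Subtype.val '' H', ?_, ?_⟩
    · rwa [Cardinal.mk_image_eq Subtype.val_injective]
    intro s hs hcard
    have hsE : ↑s ⊆ E := by
      intro x hx
      obtain ⟨w, _, rfl⟩ := hs hx
      exact w.2
    obtain ⟨t, ht⟩ := exists_finset_preimage (g := seq f (m+1) μ a₀) s hsE
    have htcard : t.card = m + 2 := by
      have h := Finset.card_image_of_injective t hinj
      rw [ht] at h
      omega
    have htne : t.Nonempty := by
      rw [← Finset.card_pos, htcard]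
      omega
    have hbk : ∀ j ∈ t.erase (t.max' htne), j < t.max' htne := fun j hj =>
      lt_of_le_of_ne (Finset.le_max' t j (Finset.mem_of_mem_erase hj))
        (Finset.ne_of_mem_erase hj)
    set k₀ := t.max' htne with hk₀
    set B := (t.erase k₀).image (seq f (m+1) μ a₀) with hB
    have hsplit : s = insert (seq f (m+1) μ a₀ k₀) B := by
      rw [hB, ← Finset.image_insert, Finset.insert_erase (t.max'_mem htne), ht]
    have hBX : ↑B ⊆ seq f (m+1) μ a₀ '' Set.Iio k₀ := by
      intro x hx
      rw [hB] at hx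
      simp only [Finset.coe_image, Set.mem_image, Finset.mem_coe] at hx
      obtain ⟨j, hj, rfl⟩ := hx
      exact ⟨j, hbk j hj, rfl⟩
    have hBcard : B.card = m + 1 := by
      rw [hB, Finset.card_image_of_injective _ hinj,
        Finset.card_erase_of_mem (t.max'_mem htne), htcard]
      omega
    have hk₀B : seq f (m+1) μ a₀ k₀ ∉ (B : Finset α) := fun h =>
      (hseq k₀).2.1 (hBX h)
    have hXA : seq f (m+1) μ a₀ '' Set.Iio k₀ ⊆ chain f (m+1) μ (Order.succ μ).ord := by
      rintro _ ⟨j, hj, rfl⟩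
      exact (hseq j).1
    have ha₀B : a₀ ∉ (B : Finset α) := fun h => ha₀ (hXA (hBX h))
    have h1 := typ_eval_pos f (m+1) (seq f (m+1) μ a₀ '' Set.Iio k₀)
      (seq f (m+1) μ a₀ k₀) (b := B) ⟨hBX, hBcard, hk₀B⟩
    have h2 := typ_eval_pos f (m+1) (seq f (m+1) μ a₀ '' Set.Iio k₀) a₀
      (b := B) ⟨hBX, hBcard, ha₀B⟩
    have key : f (insert (seq f (m+1) μ a₀ k₀) B) = f (insert a₀ B) := by
      have hcf := congrFun ((hseq k₀).2.2) B
      rw [h1, h2] at hcf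
      exact Option.some.inj hcf
    have hBE : ↑B ⊆ Set.range (Subtype.val : ↥E → α) := by
      rw [Subtype.range_coe]
      intro x hx
      obtain ⟨j, _, rfl⟩ := hBX hx
      exact ⟨j, rfl⟩
    obtain ⟨b', hb'⟩ := exists_finset_preimage (g := (Subtype.val : ↥E → α)) B hBE
    have hb'H : ↑b' ⊆ H' := by
      intro u hu
      have hmemB : (u : α) ∈ (B : Finset α) := by
        rw [← hb']
        exact Finset.mem_image_of_mem _ hu
      have hBs : (B : Finset α) ⊆ s := by
        rw [hsplit]
        exact Finset.subset_insert _ _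
      obtain ⟨w, hw, hwu⟩ := hs (hBs hmemB)
      rwa [← Subtype.val_injective hwu]
    have hb'card : b'.card = m + 1 := by
      have h := Finset.card_image_of_injective b' Subtype.val_injective
      rw [hb'] at h
      omega
    have hhom : f (insert a₀ (b'.image Subtype.val)) = c := hH' b' hb'H hb'card
    rw [hb'] at hhom
    rw [hsplit, key]
    exact hhom

end StmtAux

namespace StmtAux

variable {X : Type u} [TopologicalSpace X]

lemma pair_subset [DecidableEq X] {A : Set X} {x y : X} (hx : x ∈ A) (hy : y ∈ A) :
    ↑({x, y} : Finset X) ⊆ A := by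
  intro z hz
  simp only [Finset.coe_insert, Finset.coe_singleton, Set.mem_insert_iff,
    Set.mem_singleton_iff] at hz
  rcases hz with rfl | rfl
  exacts [hx, hy]

lemma pair_card [DecidableEq X] {x y : X} (hne : x ≠ y) : ({x, y} : Finset X).card = 2 := by
  rw [Finset.card_insert_of_notMem (by simpa using hne), Finset.card_singleton]

lemma no_big_empty_family {κ : Cardinal.{u}} (hκ : ℵ₀ ≤ κ)
    (hcell : ∀ 𝒰 : Set (Set X), (∀ U ∈ 𝒰, IsOpen U ∧ U.Nonempty) →
      𝒰.PairwiseDisjoint id → #𝒰 ≤ κ) :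
    ∀ (m : ℕ) (A : Set X) (O : X → Set X),
      (∀ x ∈ A, IsOpen (O x) ∧ (O x).Nonempty) → κ < #A →
      (∀ s : Finset X, ↑s ⊆ A → s.card = m + 2 → ⋂ x ∈ s, O x = ∅) → False := by
  intro m
  induction m with
  | zero =>
    intro A O hO hA hint
    classical
    have hpair : ∀ x ∈ A, ∀ y ∈ A, x ≠ y → O x ∩ O y = ∅ := by
      intro x hx y hy hne
      have h := hint {x, y} (pair_subset hx hy) (pair_card hne)
      rw [Set.eq_empty_iff_forall_notMem] at h ⊢
      intro z hz
      refine h z ?_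
      simp only [Set.mem_iInter, Finset.mem_insert, Finset.mem_singleton]
      intro w hw
      rcases hw with rfl | rfl
      exacts [hz.1, hz.2]
    have hinjOn : Set.InjOn O A := by
      intro x hx y hy hxy
      by_contra hne
      obtain ⟨z, hz⟩ := (hO x hx).2
      have := hpair x hx y hy hne
      rw [Set.eq_empty_iff_forall_notMem] at this
      exact this z ⟨hz, hxy ▸ hz⟩
    have hdisj : (O '' A).PairwiseDisjoint id := by
      rintro _ ⟨x, hx, rfl⟩ _ ⟨y, hy, rfl⟩ hne
      have hxy : x ≠ y := fun h => hne (by rw [h])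
      show Disjoint (O x) (O y)
      rw [Set.disjoint_iff_inter_eq_empty]
      exact hpair x hx y hy hxy
    have hle := hcell (O '' A) (by rintro _ ⟨x, hx, rfl⟩; exact hO x hx) hdisj
    rw [Cardinal.mk_image_eq_of_injOn _ _ hinjOn] at hle
    exact hA.not_ge hle
  | succ m IHm =>
    intro A O hO hA hint
    classical
    have hzorn : ∀ c ⊆ {𝒟 : Set (Set X) | 𝒟 ⊆ O '' A ∧ 𝒟.PairwiseDisjoint id},
        IsChain (· ⊆ ·) c → ∃ ub ∈ {𝒟 : Set (Set X) | 𝒟 ⊆ O '' A ∧ 𝒟.PairwiseDisjoint id},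
          ∀ s ∈ c, s ⊆ ub := by
      intro c hc hchain
      refine ⟨⋃₀ c, ⟨?_, ?_⟩, fun s hs => Set.subset_sUnion_of_mem hs⟩
      · exact Set.sUnion_subset fun t ht => (hc ht).1
      · intro U hU V hV hUV
        obtain ⟨tU, htU, hUtU⟩ := hU
        obtain ⟨tV, htV, hVtV⟩ := hV
        rcases hchain.total htU htV with h | h
        · exact (hc htV).2 (h hUtU) hVtV hUV
        · exact (hc htU).2 hUtU (h hVtV) hUV
    obtain ⟨𝒟, hmax⟩ := zorn_subset _ hzorn
    have h𝒟sub : 𝒟 ⊆ O '' A := hmax.1.1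
    have h𝒟disj : 𝒟.PairwiseDisjoint id := hmax.1.2
    have h𝒟card : #𝒟 ≤ κ :=
      hcell 𝒟 (fun U hU => by obtain ⟨x, hx, rfl⟩ := h𝒟sub hU; exact hO x hx) h𝒟disj
    -- every O x meets a member of 𝒟
    have hmeet : ∀ x ∈ A, ∃ d ∈ 𝒟, (O x ∩ d).Nonempty := by
      intro x hx
      by_contra hcon
      push_neg at hcon
      have hxnot : O x ∉ 𝒟 := by
        intro hmem
        obtain ⟨z, hz⟩ := (hO x hx).2
        exact (Set.eq_empty_iff_forall_notMem.mp (hcon (O x) hmem)) z ⟨hz, hz⟩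
      have hins : insert (O x) 𝒟 ∈ {𝒟 : Set (Set X) | 𝒟 ⊆ O '' A ∧ 𝒟.PairwiseDisjoint id} := by
        constructor
        · exact Set.insert_subset (Set.mem_image_of_mem O hx) h𝒟sub
        · refine h𝒟disj.insert ?_
          intro d hd _
          show Disjoint (O x) d
          rw [Set.disjoint_iff_inter_eq_empty]
          exact hcon d hd
      have := hmax.eq_of_subset hins (Set.subset_insert _ _)
      exact hxnot (this ▸ Set.mem_insert _ _)
    -- choose for each x ∈ A a d ∈ 𝒟
    have h𝒟ne : Nonempty ↥𝒟 := by
      have hAne : A.Nonempty := by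
        rw [← Set.nonempty_coe_sort, ← Cardinal.mk_ne_zero_iff]
        intro h0
        rw [h0] at hA
        exact (Cardinal.zero_le κ).not_gt hA
      obtain ⟨x, hx⟩ := hAne
      obtain ⟨d, hd, _⟩ := hmeet x hx
      exact ⟨⟨d, hd⟩⟩
    have hsel : ∀ x : X, ∃ d : ↥𝒟, x ∈ A → (O x ∩ d.1).Nonempty := by
      intro x
      by_cases hx : x ∈ A
      · obtain ⟨d, hd, hne⟩ := hmeet x hx
        exact ⟨⟨d, hd⟩, fun _ => hne⟩
      · exact ⟨h𝒟ne.some, fun h => absurd h hx⟩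
    choose g hg using hsel
    obtain ⟨d, hd⟩ := pigeonhole (A := A) hκ h𝒟card hA g
    -- d.1 = O w for some w ∈ A
    obtain ⟨w, hw, hOw⟩ := h𝒟sub d.2
    set A' := {a : X | a ∈ A ∧ g a = d} \ {w} with hA'
    have hA'card : κ < #A' := by
      by_contra hcon
      push_neg at hcon
      have hsub : {a : X | a ∈ A ∧ g a = d} ⊆ A' ∪ {w} := by
        intro a ha
        by_cases haw : a = w
        · exact Or.inr (by simp [haw])
        · exact Or.inl ⟨ha, by simpa using haw⟩
      have := (Cardinal.mk_le_mk_of_subset hsub).trans (Cardinal.mk_union_le _ _)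
      have h1 : #A' + #({w} : Set X) ≤ κ := by
        rw [Cardinal.mk_singleton]
        calc #A' + 1 ≤ κ + κ := add_le_add hcon (Cardinal.one_le_aleph0.trans hκ)
          _ = κ := Cardinal.add_eq_self hκ
      exact hd.not_ge (this.trans h1)
    refine IHm A' (fun x => O x ∩ O w) ?_ hA'card ?_
    · intro x hx
      constructor
      · exact ((hO x hx.1.1).1).inter ((hO w hw).1)
      · have := hg x hx.1.1
        rwa [hx.1.2, ← hOw] at this
    · intro s hs hscard
      have hwns : w ∉ s := fun hmem => (hs hmem).2 rfl
      have hins : ↑(insert w s) ⊆ A := by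
        intro z hz
        simp only [Finset.coe_insert, Set.mem_insert_iff] at hz
        rcases hz with rfl | hz
        · exact hw
        · exact (hs hz).1.1
      have hcard : (insert w s).card = m + 3 := by
        rw [Finset.card_insert_of_notMem hwns, hscard]
      have hempty := hint (insert w s) hins hcard
      rw [Set.eq_empty_iff_forall_notMem] at hempty ⊢
      intro z hz
      rw [Set.mem_iInter₂] at hz
      refine hempty z ?_
      rw [Set.mem_iInter₂]
      intro i hi
      rcases Finset.mem_insert.mp hi with rfl | hi'
      · obtain ⟨j, hj⟩ := s.nonempty_of_ne_empty (by rintro rfl; simp at hscard)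
        exact (hz j hj).2
      · exact (hz i hi').1

end StmtAux
theorem stmt11 (n : ℕ) (hn : 2 ≤ n) (X : Type u) [TopologicalSpace X]
    (hX : NHausdorff n X) (hhom : Homogeneous X) :
    #X ≤ expIter (n - 1) (cellularity X * piCharacter X) := by
  classical
  set κ := cellularity X * piCharacter X with hκdef
  have hone_cell : 1 ≤ cellularity X := le_trans (le_trans Cardinal.one_le_aleph0 (le_max_left _ _)) le_rfl
  have hone_pi : 1 ≤ piCharacter X := le_trans (le_trans Cardinal.one_le_aleph0 (le_max_left _ _)) le_rfl
  have hcellκ : cellularity X ≤ κ := by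
    calc cellularity X = cellularity X * 1 := (mul_one _).symm
      _ ≤ cellularity X * piCharacter X := mul_le_mul' le_rfl hone_pi
  have hπκ : piCharacter X ≤ κ := by
    calc piCharacter X = 1 * piCharacter X := (one_mul _).symm
      _ ≤ cellularity X * piCharacter X := mul_le_mul' hone_cell le_rfl
  have hκ : ℵ₀ ≤ κ := le_trans (le_max_left _ _) hcellκ
  by_contra hcon
  push_neg at hcon
  obtain ⟨m, rfl⟩ : ∃ m, n = m + 2 := ⟨n - 2, by omega⟩
  have hcon' : expIter (m+1) κ < #X := hcon
  have hXne : Nonempty X := by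
    rw [← Cardinal.mk_ne_zero_iff]
    intro h0
    rw [h0] at hcon'
    exact (Cardinal.zero_le _).not_gt hcon'
  obtain ⟨p⟩ := hXne
  have hcell : ∀ 𝒰 : Set (Set X), (∀ U ∈ 𝒰, IsOpen U ∧ U.Nonempty) →
      𝒰.PairwiseDisjoint id → #𝒰 ≤ κ := by
    intro 𝒰 h1 h2
    have hle : #𝒰 ≤ ⨆ 𝒰 : {𝒰 : Set (Set X) //
        (∀ U ∈ 𝒰, IsOpen U ∧ U.Nonempty) ∧ 𝒰.PairwiseDisjoint id}, #𝒰.1 :=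
      le_ciSup (Cardinal.bddAbove_range _)
        (⟨𝒰, h1, h2⟩ : {𝒰 : Set (Set X) //
          (∀ U ∈ 𝒰, IsOpen U ∧ U.Nonempty) ∧ 𝒰.PairwiseDisjoint id})
    exact hle.trans ((le_max_right _ _).trans hcellκ)
  have hSne : {κ' | ∃ B : Set (Set X), IsLocalPiBase p B ∧ #B = κ'}.Nonempty := by
    refine ⟨#{U : Set X | IsOpen U ∧ U.Nonempty},
      {U : Set X | IsOpen U ∧ U.Nonempty}, ⟨?_, ?_⟩, rfl⟩
    · exact fun U hU => hU
    · intro V hV hpV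
      exact ⟨V, ⟨hV, ⟨p, hpV⟩⟩, subset_rfl⟩
  obtain ⟨B, hBpi, hBcard⟩ := csInf_mem hSne
  have hBκ : #B ≤ κ := by
    have h1 : sInf {κ' | ∃ B : Set (Set X), IsLocalPiBase p B ∧ #B = κ'} ≤
        ⨆ x : X, sInf {κ' | ∃ B : Set (Set X), IsLocalPiBase x B ∧ #B = κ'} :=
      le_ciSup (Cardinal.bddAbove_range _) p
    rw [hBcard]
    exact (h1.trans (le_max_right _ _)).trans hπκ
  have hBne : B.Nonempty := by
    obtain ⟨U, hU, _⟩ := hBpi.2 Set.univ isOpen_univ (Set.mem_univ p)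
    exact ⟨U, hU⟩
  have hBneT : Nonempty ↥B := ⟨⟨hBne.choose, hBne.choose_spec⟩⟩
  have hhomex : ∀ x : X, ∃ h : X ≃ₜ X, h p = x := fun x => hhom p x
  choose hom hhomp using hhomex
  set f : Finset X → ↥B := fun s =>
    if hs : ∃ V : ↥B, (⋂ x ∈ s, hom x '' V.1) = ∅ then hs.choose else hBneT.some with hf
  have hfdef : ∀ s : Finset X, f s =
      if hs : ∃ V : ↥B, (⋂ x ∈ s, hom x '' V.1) = ∅ then hs.choose else hBneT.some :=
    fun s => rfl
  have hfspec : ∀ s : Finset X, s.card = m + 2 →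
      (⋂ x ∈ s, hom x '' (f s).1) = ∅ := by
    intro s hscard
    have hex : ∃ V : ↥B, (⋂ x ∈ s, hom x '' V.1) = ∅ := by
      have hcardco : Fintype.card ↥s = m + 2 := by rw [Fintype.card_coe, hscard]
      set e0 := Fintype.equivFinOfCardEq hcardco with he0
      set emb : Fin (m+2) ↪ X :=
        ⟨fun i => ((e0.symm i : ↥s) : X), Subtype.val_injective.comp e0.symm.injective⟩
        with hemb
      obtain ⟨U, hU, hUempty⟩ := hX emb
      set W := ⋂ i, (hom (emb i)) ⁻¹' (U i) with hW
      have hWopen : IsOpen W :=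
        isOpen_iInter_of_finite fun i => (hU i).1.preimage (hom (emb i)).continuous
      have hpW : p ∈ W := by
        rw [hW, Set.mem_iInter]
        intro i
        rw [Set.mem_preimage, hhomp (emb i)]
        exact (hU i).2
      obtain ⟨V, hVB, hVW⟩ := hBpi.2 W hWopen hpW
      refine ⟨⟨V, hVB⟩, ?_⟩
      rw [Set.eq_empty_iff_forall_notMem]
      intro z hz
      rw [Set.mem_iInter₂] at hz
      have hzU : ∀ i, z ∈ U i := by
        intro i
        have hmem : emb i ∈ s := (e0.symm i).2
        obtain ⟨v, hv, hvz⟩ := hz (emb i) hmem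
        have hvW : v ∈ (hom (emb i)) ⁻¹' (U i) := Set.iInter_subset (fun i => (hom (emb i)) ⁻¹' (U i)) i (hVW hv)
        rw [← hvz]
        exact hvW
      have hzi : z ∈ ⋂ i, U i := Set.mem_iInter.mpr hzU
      rw [hUempty] at hzi
      exact hzi
    rw [hfdef s, dif_pos hex]
    exact hex.choose_spec
  obtain ⟨V, H, hHcard, hHhom⟩ := StmtAux.erdosRado (m+1) κ hκ hBκ hcon' f
  refine StmtAux.no_big_empty_family hκ hcell m H (fun x => hom x '' V.1) ?_ hHcard ?_
  · intro x _
    constructor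
    · exact (Homeomorph.isOpen_image _).mpr (hBpi.1 V.1 V.2).1
    · exact ((hBpi.1 V.1 V.2).2).image _
  · intro s hs hscard
    have h1 := hfspec s hscard
    rw [hHhom s hs hscard] at h1
    exact h1
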